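/- Let τ be a positive integer such that 2^{2^τ} − 1 has at least two distinct primitive prime divisors. For each 1 ≤ j ≤ τ, let p_j be a primitive prime divisor of 2^{2^j} − 1, let q be a primitive prime divisor of 2^{2^τ} − 1 with q ≠ p_τ, and let P = p_1·p_2·⋯·p_τ. Let b > 2 be an integer with b ≡ 1 (mod P) satisfying one of: (i) b ≡ 0 (mod q); (ii) b ≡ 1 (mod q); (iii) b ≢ 0 (mod q), b ≢ 1 (mod q), and gcd(P, ord_q(b)) = 1, where ord_q(b) is the multiplicative order of b modulo q. Then there exist infinitely many positive integers t such that the b-repunit (b^t − 1)/(b − 1) is a Riesel number. -/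
import Mathlib


/-- A number is composite if it is a product of two integers greater than 1. -/
def IsComposite (n : ℕ) : Prop := ∃ a b : ℕ, 1 < a ∧ 1 < b ∧ n = a * b

/-- A Riesel number is an odd positive integer `k` such that `k·2^n − 1` is composite
for every positive integer `n`. -/
def IsRiesel (k : ℕ) : Prop := 0 < k ∧ Odd k ∧ ∀ n : ℕ, 0 < n → IsComposite (k * 2 ^ n - 1)

/-- A prime `p` is a primitive prime divisor of `2^m − 1` if `p ∣ 2^m − 1` and
`p ∤ 2^μ − 1` for every positive integer `μ < m`. -/
def IsPrimitivePrimeDivisor (p m : ℕ) : Prop :=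
  p.Prime ∧ p ∣ 2 ^ m - 1 ∧ ∀ μ : ℕ, 0 < μ → μ < m → ¬ p ∣ 2 ^ μ - 1


private lemma cast_S (b t m : ℕ) :
    ((∑ i ∈ Finset.range t, b ^ i : ℕ) : ZMod m) = ∑ i ∈ Finset.range t, (b : ZMod m) ^ i := by
  push_cast
  rfl

private lemma cast_two_pow_eq_one {r m : ℕ} (h : r ∣ 2 ^ m - 1) :
    (2 : ZMod r) ^ m = 1 := by
  have h1 : 1 ≤ 2 ^ m := Nat.one_le_two_pow
  have h2 : (1 : ℕ) ≡ 2 ^ m [MOD r] := (Nat.modEq_iff_dvd' h1).mpr h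
  have h3 := (ZMod.natCast_eq_natCast_iff _ _ r).mpr h2.symm
  push_cast at h3
  exact h3

private lemma dvd_of_cast_eq_one {r x : ℕ} (hx : 1 ≤ x) (h : ((x : ℕ) : ZMod r) = 1) :
    r ∣ x - 1 := by
  have h2 : x ≡ 1 [MOD r] := (ZMod.natCast_eq_natCast_iff x 1 r).mp (by simpa using h)
  exact (Nat.modEq_iff_dvd' hx).mp h2.symm

private lemma cast_S_eq_one_of_dvd {b r t : ℕ} (ht : 0 < t) (h : (b : ZMod r) = 0) :
    ((∑ i ∈ Finset.range t, b ^ i : ℕ) : ZMod r) = 1 := by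
  rw [cast_S, h]
  have hgs := geom_sum_mul (0 : ZMod r) t
  rw [zero_pow ht.ne'] at hgs
  linear_combination -hgs

private lemma cast_S_eq_card_of_eq_one {b r t : ℕ} (h : (b : ZMod r) = 1) :
    ((∑ i ∈ Finset.range t, b ^ i : ℕ) : ZMod r) = (t : ZMod r) := by
  rw [cast_S, h]
  simp

private lemma composite_helper {k n r : ℕ} (hr : 1 < r) (hn : 0 < n) (hk : r < k)
    (hdvd : r ∣ k * 2 ^ n - 1) : IsComposite (k * 2 ^ n - 1) := by
  obtain ⟨m, hm⟩ := hdvd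
  have h2 : 2 ≤ 2 ^ n := by
    calc 2 = 2 ^ 1 := rfl
    _ ≤ 2 ^ n := Nat.pow_le_pow_right (by norm_num) hn
  have hkk : k * 2 ≤ k * 2 ^ n := Nat.mul_le_mul_left k h2
  have hNr : r < k * 2 ^ n - 1 := by omega
  have hm1 : 1 < m := by
    rcases Nat.lt_or_ge 1 m with h | h
    · exact h
    · exfalso
      have : r * m ≤ r * 1 := Nat.mul_le_mul_left r h
      omega
  exact ⟨r, m, hr, hm1, hm⟩

set_option maxHeartbeats 2000000 in
theorem stmt_14 (τ : ℕ) (hτ : 0 < τ)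
    (htwo : ∃ q₁ q₂ : ℕ, q₁ ≠ q₂ ∧ IsPrimitivePrimeDivisor q₁ (2 ^ τ) ∧
      IsPrimitivePrimeDivisor q₂ (2 ^ τ))
    (b : ℕ) (hb : 2 < b)
    (p : Fin τ → ℕ) (hp : ∀ j : Fin τ, IsPrimitivePrimeDivisor (p j) (2 ^ (j.val + 1)))
    (q : ℕ) (hq : IsPrimitivePrimeDivisor q (2 ^ τ)) (hqp : q ≠ p ⟨τ - 1, by omega⟩)
    (P : ℕ) (hP : P = ∏ j, p j)
    (hbP : b ≡ 1 [MOD P])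
    (hcond : q ∣ b ∨ b ≡ 1 [MOD q] ∨
      (¬ q ∣ b ∧ ¬ b ≡ 1 [MOD q] ∧ Nat.gcd P (orderOf (b : ZMod q)) = 1)) :
    {t : ℕ | 0 < t ∧ IsRiesel ((b ^ t - 1) / (b - 1))}.Infinite := by
  clear htwo
  have hq_prime := hq.1
  haveI := Fact.mk hq_prime
  have hppr : ∀ j : Fin τ, (p j).Prime := fun j => (hp j).1
  have hodd_mersenne : ∀ m : ℕ, 0 < m → ¬ (2 ∣ 2 ^ m - 1) := by
    intro m hm
    have h1 : 2 ≤ 2 ^ m := by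
      calc 2 = 2 ^ 1 := rfl
      _ ≤ 2 ^ m := Nat.pow_le_pow_right (by norm_num) hm
    have h2 : (2 : ℕ) ∣ 2 ^ m := dvd_pow_self 2 hm.ne'
    omega
  have hp_ne_two : ∀ j : Fin τ, p j ≠ 2 := by
    intro j h
    exact hodd_mersenne _ (by positivity) (h ▸ (hp j).2.1)
  have hq_ne_p : ∀ j : Fin τ, q ≠ p j := by
    intro j h
    rcases Nat.lt_or_ge (j.val + 1) τ with hjτ | hjτ
    · refine hq.2.2 (2 ^ (j.val + 1)) (by positivity)
        (Nat.pow_lt_pow_right (by norm_num) hjτ) (h ▸ (hp j).2.1)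
    · have hjv : j.val = τ - 1 := by have := j.isLt; omega
      apply hqp
      rw [h]
      congr 1
      exact Fin.ext hjv
  have hPq : Nat.Coprime P q := by
    rw [hP]
    exact Nat.Coprime.prod_left fun j _ =>
      (Nat.coprime_primes (hppr j) hq_prime).mpr (fun h => hq_ne_p j h.symm)
  have hP2 : Nat.Coprime P 2 := by
    rw [hP]
    exact Nat.Coprime.prod_left fun j _ =>
      (Nat.coprime_primes (hppr j) Nat.prime_two).mpr (hp_ne_two j)
  have hPpos : 0 < P := by
    rw [hP]
    exact Finset.prod_pos fun j _ => (hppr j).pos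
  -- the repunit as a geometric sum
  have hrep : ∀ t : ℕ, (b ^ t - 1) / (b - 1) = ∑ i ∈ Finset.range t, b ^ i := by
    intro t
    have hb1 : 1 ≤ b := by omega
    have hbt : 1 ≤ b ^ t := Nat.one_le_pow _ _ (by omega)
    have hmul : b ^ t - 1 = (∑ i ∈ Finset.range t, b ^ i) * (b - 1) := by
      have hz : (∑ i ∈ Finset.range t, (b : ℤ) ^ i) * ((b : ℤ) - 1) = (b : ℤ) ^ t - 1 :=
        geom_sum_mul _ t
      have hcast : ((b ^ t - 1 : ℕ) : ℤ) = (((∑ i ∈ Finset.range t, b ^ i) * (b - 1) : ℕ) : ℤ) := by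
        push_cast [Nat.cast_sub hbt, Nat.cast_sub hb1]
        linarith [hz]
      exact Nat.cast_injective hcast
    rw [hmul, Nat.mul_div_cancel _ (by omega)]
  -- extract the auxiliary modulus e
  obtain ⟨e, hepos, heP, heC⟩ :
      ∃ e : ℕ, 0 < e ∧ Nat.Coprime P e ∧
        ∀ t : ℕ, 0 < t → t ≡ 1 [MOD e] →
          ((∑ i ∈ Finset.range t, b ^ i : ℕ) : ZMod q) = 1 := by
    rcases hcond with hc | hc | ⟨hc0, hc1, hc2⟩
    · refine ⟨1, one_pos, Nat.coprime_one_right _, fun t ht _ => ?_⟩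
      exact cast_S_eq_one_of_dvd ht ((ZMod.natCast_eq_zero_iff b q).mpr hc)
    · refine ⟨q, hq_prime.pos, hPq, fun t ht htm => ?_⟩
      have hb1 : (b : ZMod q) = 1 := by
        simpa using (ZMod.natCast_eq_natCast_iff b 1 q).mpr hc
      rw [cast_S_eq_card_of_eq_one hb1]
      simpa using (ZMod.natCast_eq_natCast_iff t 1 q).mpr htm
    · have hbne0 : (b : ZMod q) ≠ 0 := fun h =>
        hc0 ((ZMod.natCast_eq_zero_iff b q).mp h)
      have hbne1 : (b : ZMod q) ≠ 1 := fun h =>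
        hc1 ((ZMod.natCast_eq_natCast_iff b 1 q).mp (by simpa using h))
      have hdpos : 0 < orderOf (b : ZMod q) := by
        obtain ⟨u, hu⟩ := hbne0.isUnit
        rw [← hu, orderOf_units]
        exact orderOf_pos u
      refine ⟨orderOf (b : ZMod q), hdpos, hc2, fun t ht htm => ?_⟩
      obtain ⟨s, hs⟩ : orderOf (b : ZMod q) ∣ t - 1 := (Nat.modEq_iff_dvd' ht).mp htm.symm
      have hts : t = orderOf (b : ZMod q) * s + 1 := by omega
      have hbt : (b : ZMod q) ^ t = (b : ZMod q) := by
        rw [hts, pow_succ, pow_mul, pow_orderOf_eq_one, one_pow, one_mul]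
      have hgs := geom_sum_mul (b : ZMod q) t
      rw [hbt] at hgs
      have hne : (b : ZMod q) - 1 ≠ 0 := sub_ne_zero.mpr hbne1
      rw [cast_S]
      exact mul_right_cancel₀ hne (hgs.trans (one_mul ((b : ZMod q) - 1)).symm)
  -- chinese remainder
  have hcop : Nat.Coprime P (2 * e) := Nat.Coprime.mul_right hP2 heP
  obtain ⟨t₀, ht₀P, ht₀e⟩ := Nat.chineseRemainder hcop (P - 1) 1
  set M := P * (2 * e) with hM
  have hMpos : 0 < M := by positivity
  refine Set.infinite_of_injective_forall_mem
    (f := fun s : ℕ => t₀ + (s + P + q + 2) * M) ?_ ?_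
  · intro a a' h
    simp only at h
    have h2 := Nat.add_left_cancel h
    have h3 := Nat.eq_of_mul_eq_mul_right hMpos h2
    omega
  · intro s
    set t := t₀ + (s + P + q + 2) * M with ht_def
    have hPM : P ∣ M := hM ▸ dvd_mul_right P (2 * e)
    have heM : (2 * e) ∣ M := hM ▸ dvd_mul_left (2 * e) P
    have htP : t ≡ P - 1 [MOD P] := by
      have h1 : t₀ + (s + P + q + 2) * M ≡ t₀ + 0 [MOD P] :=
        (Nat.ModEq.refl t₀).add (Nat.modEq_zero_iff_dvd.mpr (hPM.mul_left _))
      simpa using h1.trans ht₀P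
    have hte : t ≡ 1 [MOD 2 * e] := by
      have h1 : t₀ + (s + P + q + 2) * M ≡ t₀ + 0 [MOD 2 * e] :=
        (Nat.ModEq.refl t₀).add (Nat.modEq_zero_iff_dvd.mpr (heM.mul_left _))
      simpa using h1.trans ht₀e
    have htodd : t % 2 = 1 := Nat.ModEq.of_dvd (dvd_mul_right 2 e) hte
    have hte1 : t ≡ 1 [MOD e] := Nat.ModEq.of_dvd (dvd_mul_left e 2) hte
    have htbig : P + q + 2 ≤ t := by
      have h1 := Nat.le_mul_of_pos_right (s + P + q + 2) hMpos
      omega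
    have htpos : 0 < t := by omega
    have hPt1 : P ∣ t + 1 := by
      have h1 : t + 1 ≡ (P - 1) + 1 [MOD P] := htP.add_right 1
      have h2 : (P - 1) + 1 = P := by omega
      rw [h2] at h1
      exact Nat.modEq_zero_iff_dvd.mp (h1.trans (Nat.modEq_zero_iff_dvd.mpr dvd_rfl))
    simp only [Set.mem_setOf_eq]
    rw [hrep t]
    set k := ∑ i ∈ Finset.range t, b ^ i with hk_def
    have hkt : t ≤ k := by
      calc t = ∑ i ∈ Finset.range t, 1 := by simp
      _ ≤ k := Finset.sum_le_sum fun i _ => Nat.one_le_pow _ _ (by omega)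
    refine ⟨htpos, by omega, ?_, ?_⟩
    · -- k is odd
      have hk2 : ((k : ℕ) : ZMod 2) = 1 := by
        rcases Nat.even_or_odd b with hbe | hbo
        · exact cast_S_eq_one_of_dvd htpos
            ((ZMod.natCast_eq_zero_iff b 2).mpr hbe.two_dvd)
        · have hb1 : (b : ZMod 2) = 1 := by
            have : b ≡ 1 [MOD 2] := by
              have := Nat.odd_iff.mp hbo
              simpa [Nat.ModEq] using this
            simpa using (ZMod.natCast_eq_natCast_iff b 1 2).mpr this
          rw [cast_S_eq_card_of_eq_one hb1]
          have : t ≡ 1 [MOD 2] := by simpa [Nat.ModEq] using htodd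
          simpa using (ZMod.natCast_eq_natCast_iff t 1 2).mpr this
      have hmod : k ≡ 1 [MOD 2] := (ZMod.natCast_eq_natCast_iff k 1 2).mp (by simpa using hk2)
      have : k % 2 = 1 := by simpa [Nat.ModEq] using hmod
      exact Nat.odd_iff.mpr this
    · -- k * 2^n - 1 is composite for all n ≥ 1
      intro n hn
      have hkpos : 1 ≤ k := by omega
      have hk2n : 1 ≤ k * 2 ^ n := Nat.one_le_iff_ne_zero.mpr (by positivity)
      by_cases h2τ : 2 ^ τ ∣ n
      · -- use prime q
        obtain ⟨m, hm⟩ := h2τ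
        have h2q : (2 : ZMod q) ^ n = 1 := by
          rw [hm, pow_mul, cast_two_pow_eq_one hq.2.1, one_pow]
        have hSq : ((k : ℕ) : ZMod q) = 1 := heC t htpos hte1
        have hcast : ((k * 2 ^ n : ℕ) : ZMod q) = 1 := by
          push_cast
          rw [hSq, h2q, one_mul]
        exact composite_helper hq_prime.one_lt hn (by omega)
          (dvd_of_cast_eq_one hk2n hcast)
      · -- use prime p j with j = v₂(n)
        have hnne : n ≠ 0 := hn.ne'
        set v := n.factorization 2 with hv
        have hvlt : v < τ := by
          by_contra hge
          push_neg at hge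
          exact h2τ ((pow_dvd_pow 2 hge).trans (Nat.ordProj_dvd n 2))
        obtain ⟨hpj_prime, hpj_dvd, hpj_min⟩ := hp ⟨v, hvlt⟩
        have hpj_dvd' : p ⟨v, hvlt⟩ ∣ 2 ^ (2 ^ (v + 1)) - 1 := hpj_dvd
        have hpj_min' : ∀ μ : ℕ, 0 < μ → μ < 2 ^ (v + 1) → ¬ p ⟨v, hvlt⟩ ∣ 2 ^ μ - 1 := hpj_min
        have hmn : 2 ^ v * (n / 2 ^ v) = n := Nat.ordProj_mul_ordCompl_eq_self n 2
        have hmodd : Odd (n / 2 ^ v) := by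
          have h1 : ¬ (2 ∣ n / 2 ^ v) := Nat.not_dvd_ordCompl Nat.prime_two hnne
          exact Nat.odd_iff.mpr (by omega)
        haveI := Fact.mk hpj_prime
        have hpj_dvd_P : p ⟨v, hvlt⟩ ∣ P := hP ▸ Finset.dvd_prod_of_mem p (Finset.mem_univ _)
        have hx2 : ((2 : ZMod (p ⟨v, hvlt⟩)) ^ (2 ^ v)) ^ 2 = 1 := by
          rw [← pow_mul, ← pow_succ]
          exact cast_two_pow_eq_one hpj_dvd'
        have hxne : (2 : ZMod (p ⟨v, hvlt⟩)) ^ (2 ^ v) ≠ 1 := by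
          intro h
          refine hpj_min' (2 ^ v) (by positivity)
            (Nat.pow_lt_pow_right (by norm_num) (by omega)) ?_
          refine dvd_of_cast_eq_one Nat.one_le_two_pow ?_
          push_cast
          exact h
        have hxneg : (2 : ZMod (p ⟨v, hvlt⟩)) ^ (2 ^ v) = -1 := by
          have hx2' : (2 : ZMod (p ⟨v, hvlt⟩)) ^ (2 ^ v) * (2 : ZMod (p ⟨v, hvlt⟩)) ^ (2 ^ v) = 1 := by
            rw [← pow_two]
            exact hx2
          rcases mul_self_eq_one_iff.mp hx2' with h | h
          · exact absurd h hxne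
          · exact h
        have h2n : (2 : ZMod (p ⟨v, hvlt⟩)) ^ n = -1 := by
          conv_lhs => rw [← hmn]
          rw [pow_mul, hxneg]
          exact hmodd.neg_one_pow
        have hb1p : (b : ZMod (p ⟨v, hvlt⟩)) = 1 := by
          have hm1 : b ≡ 1 [MOD p ⟨v, hvlt⟩] := Nat.ModEq.of_dvd hpj_dvd_P hbP
          simpa using (ZMod.natCast_eq_natCast_iff b 1 _).mpr hm1
        have htp : ((t : ℕ) : ZMod (p ⟨v, hvlt⟩)) = -1 := by
          have h0 : ((t + 1 : ℕ) : ZMod (p ⟨v, hvlt⟩)) = 0 :=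
            (ZMod.natCast_eq_zero_iff _ _).mpr (hpj_dvd_P.trans hPt1)
          push_cast at h0
          exact eq_neg_of_add_eq_zero_left h0
        have hSp : ((k : ℕ) : ZMod (p ⟨v, hvlt⟩)) = -1 := by
          rw [hk_def, cast_S_eq_card_of_eq_one hb1p]
          exact htp
        have hcast : ((k * 2 ^ n : ℕ) : ZMod (p ⟨v, hvlt⟩)) = 1 := by
          push_cast
          rw [hSp, h2n]
          ring
        have hpjP : p ⟨v, hvlt⟩ ≤ P := Nat.le_of_dvd hPpos hpj_dvd_P
        exact composite_helper hpj_prime.one_lt hn (by omega)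
          (dvd_of_cast_eq_one hk2n hcast)
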